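/- Let N ≥ 2 and let a_1, …, a_N be vectors in a complex inner product space E with norm ‖·‖ induced by the inner product. Then ∑_{i=1}^N ‖a_i‖² ≥ (1/N) · ‖∑_{i=1}^N a_i‖² + (2/(N²(N − 1))) · (∑_{1 ≤ i < j ≤ N} ‖a_i − a_j‖)². -/

import Mathlib

open Finset in
theorem pair_sum_aux {N : ℕ} (f : Fin N → Fin N → ℝ)
    (hsymm : ∀ i j, f i j = f j i) (hdiag : ∀ i, f i i = 0) :
    2 * ∑ p ∈ univ.filter (fun p : Fin N × Fin N => p.1 < p.2), f p.1 p.2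
      = ∑ i, ∑ j, f i j := by
  have hswap : ∑ p ∈ univ.filter (fun p : Fin N × Fin N => p.2 < p.1), f p.1 p.2
      = ∑ p ∈ univ.filter (fun p : Fin N × Fin N => p.1 < p.2), f p.1 p.2 := by
    apply Finset.sum_nbij' (fun p => Prod.swap p) (fun p => Prod.swap p) <;>
      simp_all [Finset.mem_filter]
  have hfull : ∑ i, ∑ j, f i j = ∑ p ∈ (univ : Finset (Fin N × Fin N)), f p.1 p.2 := by
    rw [← Finset.sum_product']
    rfl
  rw [hfull, ← Finset.sum_filter_add_sum_filter_not univ (fun p : Fin N × Fin N => p.1 < p.2)]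
  have h2 : ∑ p ∈ univ.filter (fun p : Fin N × Fin N => ¬ p.1 < p.2), f p.1 p.2
      = ∑ p ∈ univ.filter (fun p : Fin N × Fin N => p.2 < p.1), f p.1 p.2 := by
    rw [← Finset.sum_filter_add_sum_filter_not
      (univ.filter (fun p : Fin N × Fin N => ¬ p.1 < p.2)) (fun p => p.2 < p.1)]
    have e1 : (univ.filter (fun p : Fin N × Fin N => ¬ p.1 < p.2)).filter
        (fun p => p.2 < p.1) = univ.filter (fun p : Fin N × Fin N => p.2 < p.1) := by
      ext p; simp only [Finset.mem_filter, Finset.mem_univ, true_and]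
      constructor
      · exact fun h => h.2
      · exact fun h => ⟨not_lt_of_gt h, h⟩
    rw [e1]
    have e2 : ∑ p ∈ (univ.filter (fun p : Fin N × Fin N => ¬ p.1 < p.2)).filter
        (fun p => ¬ p.2 < p.1), f p.1 p.2 = 0 := by
      apply Finset.sum_eq_zero
      intro p hp
      simp only [Finset.mem_filter, Finset.mem_univ, true_and, not_lt] at hp
      have : p.1 = p.2 := le_antisymm hp.2 hp.1
      rw [this, hdiag]
    rw [e2, add_zero]
  rw [h2, hswap]; ring

open Finset in
theorem sum_sq_norm_ge_ren {E : Type*} [NormedAddCommGroup E] [InnerProductSpace ℂ E]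
    (N : ℕ) (hN : 2 ≤ N) (a : Fin N → E) :
    ∑ i, ‖a i‖ ^ 2 ≥
      (1 / (N : ℝ)) * ‖∑ i, a i‖ ^ 2 +
        (2 / ((N : ℝ) ^ 2 * ((N : ℝ) - 1))) *
          (∑ p ∈ univ.filter (fun p : Fin N × Fin N => p.1 < p.2), ‖a p.1 - a p.2‖) ^ 2 := by
  set S := ∑ i, ‖a i‖ ^ 2 with hS
  set T := ‖∑ i, a i‖ ^ 2 with hT
  set P := ∑ p ∈ univ.filter (fun p : Fin N × Fin N => p.1 < p.2), ‖a p.1 - a p.2‖ with hP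
  set Q := ∑ p ∈ univ.filter (fun p : Fin N × Fin N => p.1 < p.2), ‖a p.1 - a p.2‖ ^ 2 with hQ
  have hNR : (2:ℝ) ≤ (N:ℝ) := by exact_mod_cast hN
  -- identity: 2Q = 2N S - 2T
  have hinner : ∑ i, ∑ j, (RCLike.re (inner ℂ (a i) (a j))) = T := by
    rw [hT, ← inner_self_eq_norm_sq (𝕜 := ℂ), sum_inner]
    rw [map_sum]
    congr 1; ext i
    rw [inner_sum, map_sum]
  have hid : 2 * Q = 2 * (N:ℝ) * S - 2 * T := by
    rw [hQ, pair_sum_aux (fun i j => ‖a i - a j‖ ^ 2)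
      (fun i j => by simp [norm_sub_rev (a i) (a j)]) (fun i => by simp)]
    have : ∀ i j : Fin N, ‖a i - a j‖ ^ 2
        = ‖a i‖ ^ 2 - 2 * (RCLike.re (inner ℂ (a i) (a j))) + ‖a j‖ ^ 2 :=
      fun i j => norm_sub_sq (𝕜 := ℂ) (a i) (a j)
    simp only [this]
    simp only [Finset.sum_add_distrib, Finset.sum_sub_distrib, Finset.sum_const,
      Finset.card_univ, Fintype.card_fin, nsmul_eq_mul, ← Finset.mul_sum, hinner]
    rw [← hS]
    ring
  -- Cauchy-Schwarz
  have hcard : 2 * ((univ.filter (fun p : Fin N × Fin N => p.1 < p.2)).card : ℝ)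
      = (N:ℝ)^2 - (N:ℝ) := by
    have key := pair_sum_aux (fun i j : Fin N => if i = j then 0 else 1)
      (fun i j => by simp [eq_comm]) (fun i => by simp)
    have hl : ∑ p ∈ univ.filter (fun p : Fin N × Fin N => p.1 < p.2),
        (fun i j : Fin N => if i = j then (0:ℝ) else 1) p.1 p.2
        = ((univ.filter (fun p : Fin N × Fin N => p.1 < p.2)).card : ℝ) := by
      rw [Finset.sum_congr rfl (fun p hp => ?_), Finset.sum_const, nsmul_eq_mul, mul_one]
      simp only [Finset.mem_filter] at hp
      simp [ne_of_lt hp.2]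
    have hr : ∀ i : Fin N, ∑ j, (fun i j : Fin N => if i = j then (0:ℝ) else 1) i j
        = (N:ℝ) - 1 := by
      intro i
      have : ∀ j : Fin N, (if i = j then (0:ℝ) else 1) = 1 - (if i = j then 1 else 0) := by
        intro j; split <;> norm_num
      simp only [this, Finset.sum_sub_distrib, Finset.sum_const, Finset.card_univ,
        Fintype.card_fin, nsmul_eq_mul, mul_one, Finset.sum_ite_eq, Finset.mem_univ, if_true]
    rw [hl] at key
    rw [key]
    simp only [hr, Finset.sum_const, Finset.card_univ, Fintype.card_fin, nsmul_eq_mul]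
    ring
  have hcs : P^2 ≤ ((univ.filter (fun p : Fin N × Fin N => p.1 < p.2)).card : ℝ) * Q := by
    rw [hP, hQ]
    exact_mod_cast sq_sum_le_card_mul_sum_sq (s := univ.filter (fun p : Fin N × Fin N => p.1 < p.2)) (f := fun p => ‖a p.1 - a p.2‖)
  have h2P : 2*P^2 ≤ ((N:ℝ)^2 - (N:ℝ)) * Q := by
    rw [← hcard]; nlinarith [hcs]
  have hq : Q = (N:ℝ)*S - T := by linarith
  rw [hq] at h2P
  have hden : (0:ℝ) < (N:ℝ)^2 * ((N:ℝ)-1) := by nlinarith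
  rw [ge_iff_le, ← sub_nonneg]
  have key2 : S - (1/(N:ℝ)*T + 2/((N:ℝ)^2*((N:ℝ)-1))*P^2)
      = ((N:ℝ)^2*((N:ℝ)-1)*S - (N:ℝ)*((N:ℝ)-1)*T - 2*P^2) / ((N:ℝ)^2*((N:ℝ)-1)) := by
    have hN1 : (N:ℝ) - 1 ≠ 0 := by linarith
    have hN0 : (N:ℝ) ≠ 0 := by linarith
    field_simp
    ring
  rw [key2]
  apply div_nonneg _ hden.le
  nlinarith [h2P]
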